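/- Let X and Y be n×n Hermitian complex matrices such that X ≤ (U Y Uᴴ + V Y Vᴴ)/2 in the Loewner order for some n×n unitary matrices U and V. Then for every k = 1, 2, …, n, the sum of the k largest eigenvalues of X is at most the sum of the k largest eigenvalues of Y: ∑_{j=1}^k λ_j(X) ≤ ∑_{j=1}^k λ_j(Y). -/

import Mathlib

open Matrix
open scoped ComplexOrder

/-- The `j`-th largest eigenvalue of a Hermitian matrix (`0`-indexed, so `eigDesc hA ⟨0, _⟩`
is the largest), counted with multiplicity. -/
noncomputable def eigDesc {n : ℕ} {A : Matrix (Fin n) (Fin n) ℂ} (hA : A.IsHermitian)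
    (j : Fin n) : ℝ :=
  hA.eigenvalues (Tuple.sort hA.eigenvalues j.rev)

/-- Applying a real function to a Hermitian matrix via the functional calculus yields a
Hermitian matrix. -/
lemma isHermitian_cfc {n : ℕ} {A : Matrix (Fin n) (Fin n) ℂ} (hA : A.IsHermitian)
    (f : ℝ → ℝ) : (hA.cfc f).IsHermitian := by
  rw [← hA.cfc_eq]
  exact cfc_predicate f A

lemma isHermitian_half_smul {n : ℕ} {X : Matrix (Fin n) (Fin n) ℂ} (hX : X.IsHermitian) :
    ((2 : ℝ)⁻¹ • X).IsHermitian := by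
  show _ = _
  rw [Matrix.conjTranspose_smul, star_trivial, hX.eq]

lemma isHermitian_sum_conj {m n : ℕ} {A : Fin m → Matrix (Fin n) (Fin n) ℂ}
    (Z : Fin m → Matrix (Fin n) (Fin n) ℂ) (hA : ∀ i, (A i).IsHermitian) :
    (∑ i, (Z i)ᴴ * A i * Z i).IsHermitian := by
  show _ = _
  rw [Matrix.conjTranspose_sum]
  exact Finset.sum_congr rfl fun i _ => (isHermitian_conjTranspose_mul_mul (Z i) (hA i)).eq

lemma inner_eq_star_dot {n : ℕ} (x y : EuclideanSpace ℂ (Fin n)) :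
    (inner ℂ x y : ℂ) = star (x : Fin n → ℂ) ⬝ᵥ (y : Fin n → ℂ) := by
  simp [PiLp.inner_apply, dotProduct, RCLike.inner_apply, mul_comm]

lemma majorize {n : ℕ} (lam s : Fin n → ℝ) (S : Finset (Fin n))
    (hs0 : ∀ i, 0 ≤ s i) (hs1 : ∀ i, s i ≤ 1) (hsum : ∑ i, s i = S.card)
    (hS : ∀ a ∈ S, ∀ b ∉ S, lam b ≤ lam a) (hne : S.Nonempty) :
    ∑ i, lam i * s i ≤ ∑ i ∈ S, lam i := by
  classical
  set t : ℝ := (S.image lam).min' (hne.image lam) with ht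
  obtain ⟨a0, ha0S, ha0⟩ := Finset.mem_image.mp ((S.image lam).min'_mem (hne.image lam))
  have htle : ∀ a ∈ S, t ≤ lam a := fun a ha => Finset.min'_le _ _ (Finset.mem_image_of_mem _ ha)
  have hble : ∀ b ∉ S, lam b ≤ t := fun b hb => (hS a0 ha0S b hb).trans ha0.le
  set χ : Fin n → ℝ := fun i => if i ∈ S then 1 else 0 with hχ
  have hχsum : ∑ i, χ i = (S.card : ℝ) := by simp [hχ]
  have hrhs : ∑ i, lam i * χ i = ∑ i ∈ S, lam i := by
    simp [hχ, mul_ite, mul_one, mul_zero, Finset.sum_ite_mem, Finset.univ_inter]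
  have hterm : ∀ i, (lam i - t) * (s i - χ i) ≤ 0 := by
    intro i
    by_cases hi : i ∈ S
    · exact mul_nonpos_of_nonneg_of_nonpos (by linarith [htle i hi]) (by simp [hχ, hi, hs1 i])
    · exact mul_nonpos_of_nonpos_of_nonneg (by linarith [hble i hi]) (by simp [hχ, hi, hs0 i])
  have hkey : ∑ i, (lam i - t) * (s i - χ i) = ∑ i, lam i * s i - ∑ i, lam i * χ i := by
    have h1 : ∀ i, (lam i - t) * (s i - χ i) = lam i * s i - lam i * χ i - t * s i + t * χ i := by
      intro i; ring
    simp only [h1, Finset.sum_add_distrib, Finset.sum_sub_distrib, ← Finset.mul_sum, hsum, hχsum]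
    ring
  have h2 := Finset.sum_nonpos (fun i (_ : i ∈ Finset.univ) => hterm i)
  rw [hkey] at h2
  linarith

variable {n k : ℕ}

/-- the indices of the `k` largest eigenvalues -/
noncomputable def topIdx {A : Matrix (Fin n) (Fin n) ℂ} (hA : A.IsHermitian) (hkn : k ≤ n) :
    Fin k → Fin n := fun j => Tuple.sort hA.eigenvalues ((Fin.castLE hkn j).rev)

lemma topIdx_injective {A : Matrix (Fin n) (Fin n) ℂ} (hA : A.IsHermitian) (hkn : k ≤ n) :
    Function.Injective (topIdx hA hkn) := by
  intro i j h
  have := (Tuple.sort hA.eigenvalues).injective h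
  have := Fin.rev_injective this
  exact Fin.castLE_injective hkn this

lemma mem_topIdx_iff {A : Matrix (Fin n) (Fin n) ℂ} (hA : A.IsHermitian) (hkn : k ≤ n)
    (a : Fin n) :
    a ∈ Finset.image (topIdx hA hkn) Finset.univ ↔
      n - k ≤ ((Tuple.sort hA.eigenvalues).symm a : ℕ) := by
  simp only [Finset.mem_image, Finset.mem_univ, true_and, topIdx]
  constructor
  · rintro ⟨j, rfl⟩
    rw [Equiv.symm_apply_apply]
    simp only [Fin.val_rev, Fin.coe_castLE]
    omega
  · intro h
    set q := (Tuple.sort hA.eigenvalues).symm a with hq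
    have hqlt : (q : ℕ) < n := q.isLt
    refine ⟨⟨n - 1 - (q : ℕ), by omega⟩, ?_⟩
    have : (Fin.castLE hkn ⟨n - 1 - (q : ℕ), by omega⟩).rev = q := by
      ext
      simp only [Fin.val_rev, Fin.coe_castLE]
      omega
    rw [this, hq, Equiv.apply_symm_apply]

lemma sum_eigDesc_eq {A : Matrix (Fin n) (Fin n) ℂ} (hA : A.IsHermitian) (hkn : k ≤ n) :
    ∑ j : Fin k, eigDesc hA (Fin.castLE hkn j) =
      ∑ i ∈ Finset.image (topIdx hA hkn) Finset.univ, hA.eigenvalues i := by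
  rw [Finset.sum_image (fun i _ j _ h => topIdx_injective hA hkn h)]
  rfl

lemma topIdx_order {A : Matrix (Fin n) (Fin n) ℂ} (hA : A.IsHermitian) (hkn : k ≤ n) :
    ∀ a ∈ Finset.image (topIdx hA hkn) Finset.univ,
      ∀ b ∉ Finset.image (topIdx hA hkn) Finset.univ,
        hA.eigenvalues b ≤ hA.eigenvalues a := by
  intro a ha b hb
  rw [mem_topIdx_iff] at ha hb
  push_neg at hb
  set σ := Tuple.sort hA.eigenvalues
  have h1 : σ.symm b ≤ σ.symm a := by
    rw [Fin.le_def]; omega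
  have := Tuple.monotone_sort hA.eigenvalues h1
  simpa [σ, Function.comp] using this

lemma key_bessel {n k : ℕ} {Y : Matrix (Fin n) (Fin n) ℂ} (hY : Y.IsHermitian)
    (hkn : k ≤ n) (hk : 1 ≤ k) (u : Fin k → (Fin n → ℂ))
    (hu : ∀ i j, star (u i) ⬝ᵥ u j = if i = j then 1 else 0) :
    ∑ j, (star (u j) ⬝ᵥ (Y *ᵥ u j)).re ≤ ∑ j : Fin k, eigDesc hY (Fin.castLE hkn j) := by
  classical
  set E : Matrix (Fin n) (Fin n) ℂ := (hY.eigenvectorUnitary : Matrix (Fin n) (Fin n) ℂ) with hEdef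
  have hE1 : E * Eᴴ = 1 := by
    rw [← Matrix.star_eq_conjTranspose, ← Matrix.mem_unitaryGroup_iff]
    exact hY.eigenvectorUnitary.2
  have hE2 : Eᴴ * E = 1 := by
    rw [← Matrix.star_eq_conjTranspose, ← Matrix.mem_unitaryGroup_iff']
    exact hY.eigenvectorUnitary.2
  set lam := hY.eigenvalues with hlam
  set c : Fin k → Fin n → ℂ := fun j => Eᴴ *ᵥ u j with hcdef
  have hstarc : ∀ j, star (c j) = star (u j) ᵥ* E := by
    intro j
    rw [hcdef, star_mulVec, conjTranspose_conjTranspose]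
  -- value of the quadratic form
  have hq : ∀ j, (star (u j) ⬝ᵥ (Y *ᵥ u j)).re = ∑ i, lam i * Complex.normSq (c j i) := by
    intro j
    conv_lhs => rw [hY.spectral_theorem, Unitary.conjStarAlgAut_apply]
    simp only [Unitary.coe_star, ← hEdef, Matrix.star_eq_conjTranspose]
    rw [← mulVec_mulVec, ← mulVec_mulVec, dotProduct_mulVec,
      show star (u j) ᵥ* E = star (c j) from (hstarc j).symm,
      show Eᴴ *ᵥ u j = c j from rfl]
    have : star (c j) ⬝ᵥ (diagonal (RCLike.ofReal ∘ lam) *ᵥ c j)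
        = ∑ i, (lam i : ℂ) * ((starRingEnd ℂ) (c j i) * c j i) := by
      simp only [dotProduct, mulVec_diagonal, Function.comp, Pi.star_apply]
      exact Finset.sum_congr rfl fun i _ => by rw [show star (c j i) = (starRingEnd ℂ) (c j i) from rfl]; exact mul_left_comm ((starRingEnd ℂ) (c j i)) ((lam i : ℂ)) (c j i)
    rw [this, Complex.re_sum]
    refine Finset.sum_congr rfl fun i _ => ?_
    rw [← Complex.normSq_eq_conj_mul_self, ← Complex.ofReal_mul, Complex.ofReal_re]
  set s : Fin n → ℝ := fun i => ∑ j, Complex.normSq (c j i) with hsdef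
  have hLHS : ∑ j, (star (u j) ⬝ᵥ (Y *ᵥ u j)).re = ∑ i, lam i * s i := by
    simp only [hq, hsdef, Finset.mul_sum]
    rw [Finset.sum_comm]
  -- orthonormal family in EuclideanSpace
  set v : Fin k → EuclideanSpace ℂ (Fin n) := fun j => WithLp.toLp 2 (u j) with hvdef
  have hv : Orthonormal ℂ v := by
    rw [orthonormal_iff_ite]
    intro i j
    rw [inner_eq_star_dot]
    simpa using hu i j
  -- sum of s equals k
  have hcc : ∀ j, star (c j) ⬝ᵥ c j = 1 := by
    intro j
    rw [hstarc j, ← dotProduct_mulVec, hcdef, mulVec_mulVec, hE1, one_mulVec]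
    simpa using hu j j
  have hsumrow : ∀ j, ∑ i, Complex.normSq (c j i) = 1 := by
    intro j
    have h := congrArg Complex.re (hcc j)
    simp only [dotProduct, Pi.star_apply, Complex.re_sum, Complex.one_re] at h
    rw [← h]
    refine Finset.sum_congr rfl fun i _ => ?_
    rw [show star (c j i) * c j i = ((starRingEnd ℂ) (c j i)) * c j i from rfl,
      ← Complex.normSq_eq_conj_mul_self, Complex.ofReal_re]
  have hsum : ∑ i, s i = (k : ℝ) := by
    rw [hsdef]
    rw [Finset.sum_comm]
    simp [hsumrow]
  -- Bessel bound
  have hs1 : ∀ i, s i ≤ 1 := by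
    intro i
    set e : EuclideanSpace ℂ (Fin n) := WithLp.toLp 2 (fun t => E t i : Fin n → ℂ) with hedef
    have hci : ∀ j, Complex.normSq (c j i) = ‖(inner ℂ (v j) e : ℂ)‖ ^ 2 := by
      intro j
      rw [inner_eq_star_dot]
      have : c j i = (starRingEnd ℂ) (star (v j) ⬝ᵥ (e : Fin n → ℂ)) := by
        simp only [hcdef, mulVec, dotProduct, Pi.star_apply, map_sum, _root_.map_mul,
          RingHom.coe_comp, conjTranspose_apply, hedef]
        refine Finset.sum_congr rfl fun t _ => ?_
        simp [hvdef, mul_comm]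
      rw [this, Complex.normSq_conj, ← Complex.sq_norm]
    have hbessel := hv.sum_inner_products_le (s := Finset.univ) e
    have henorm : ‖e‖ ^ 2 = 1 := by
      rw [← inner_self_eq_norm_sq (𝕜 := ℂ), inner_eq_star_dot]
      have : star (e : Fin n → ℂ) ⬝ᵥ (e : Fin n → ℂ) = (Eᴴ * E) i i := by
        simp [dotProduct, Matrix.mul_apply, conjTranspose_apply, hedef]
      rw [this, hE2]
      simp
    rw [henorm] at hbessel
    calc s i = ∑ j, ‖(inner ℂ (v j) e : ℂ)‖ ^ 2 := by
          rw [hsdef]; exact Finset.sum_congr rfl fun j _ => hci j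
      _ ≤ 1 := hbessel
  have hs0 : ∀ i, 0 ≤ s i := by
    intro i
    exact Finset.sum_nonneg fun j _ => Complex.normSq_nonneg _
  -- apply majorization
  have hcard : (Finset.image (topIdx hY hkn) Finset.univ).card = k := by
    rw [Finset.card_image_of_injective _ (topIdx_injective hY hkn)]
    simp
  have hne : (Finset.image (topIdx hY hkn) Finset.univ).Nonempty := by
    rw [← Finset.card_pos, hcard]; omega
  have := majorize lam s (Finset.image (topIdx hY hkn) Finset.univ) hs0 hs1
    (by rw [hcard, hsum]) (topIdx_order hY hkn) hne
  rw [hLHS, sum_eigDesc_eq hY hkn]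
  exact this

/-- **Remark 1.3 (Ky Fan).** If `X ≤ (U Y Uᴴ + V Y Vᴴ)/2` for some unitaries `U, V`, then
for each `k`, the sum of the `k` largest eigenvalues of `X` is at most that of `Y`. -/
theorem sum_eig_le_of_le_mean_unitary_conj
    {n : ℕ} (X Y : Matrix (Fin n) (Fin n) ℂ) (hX : X.IsHermitian) (hY : Y.IsHermitian)
    (U V : Matrix (Fin n) (Fin n) ℂ)
    (hU : U ∈ Matrix.unitaryGroup (Fin n) ℂ) (hV : V ∈ Matrix.unitaryGroup (Fin n) ℂ)
    (hle : ((2 : ℝ)⁻¹ • (U * Y * Uᴴ + V * Y * Vᴴ) - X).PosSemidef)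
    (k : ℕ) (hk : 1 ≤ k) (hkn : k ≤ n) :
    ∑ j : Fin k, eigDesc hX (Fin.castLE hkn j) ≤
      ∑ j : Fin k, eigDesc hY (Fin.castLE hkn j) := by
  classical
  have hUU : U * Uᴴ = 1 := by
    rw [← Matrix.star_eq_conjTranspose, ← Matrix.mem_unitaryGroup_iff]; exact hU
  have hVV : V * Vᴴ = 1 := by
    rw [← Matrix.star_eq_conjTranspose, ← Matrix.mem_unitaryGroup_iff]; exact hV
  set p : Fin k → Fin n := topIdx hX hkn with hp
  set w : Fin k → (Fin n → ℂ) := fun j => (hX.eigenvectorBasis (p j) : Fin n → ℂ) with hw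
  -- orthonormality of the w's
  have hww : ∀ i j, star (w i) ⬝ᵥ w j = if i = j then 1 else 0 := by
    intro i j
    have hON := hX.eigenvectorBasis.orthonormal
    rw [orthonormal_iff_ite] at hON
    have h2 := hON (p i) (p j)
    rw [inner_eq_star_dot] at h2
    rw [show star (w i) ⬝ᵥ w j
        = star (hX.eigenvectorBasis (p i) : Fin n → ℂ) ⬝ᵥ (hX.eigenvectorBasis (p j) : Fin n → ℂ)
        from rfl, h2]
    by_cases hij : i = j
    · simp [hij]
    · rw [if_neg hij, if_neg (fun h => hij (topIdx_injective hX hkn h))]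
  -- the k largest eigenvalues of X are the quadratic forms at the w's
  have heig : ∀ j : Fin k, eigDesc hX (Fin.castLE hkn j) = (star (w j) ⬝ᵥ (X *ᵥ w j)).re := by
    intro j
    have hmv := hX.mulVec_eigenvectorBasis (p j)
    have h1 : star (w j) ⬝ᵥ (X *ᵥ w j) = (hX.eigenvalues (p j) : ℂ) := by
      rw [show X *ᵥ w j = hX.eigenvalues (p j) • w j from hmv]
      rw [dotProduct_smul]
      have := hww j j
      rw [if_pos rfl] at this
      rw [this]
      simp [Complex.real_smul]
    have h2 : eigDesc hX (Fin.castLE hkn j) = hX.eigenvalues (p j) := rfl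
    rw [h2, h1, Complex.ofReal_re]
  -- the quadratic form bound from the hypothesis
  have hquad : ∀ v : Fin n → ℂ, (star v ⬝ᵥ (X *ᵥ v)).re ≤
      2⁻¹ * (star (Uᴴ *ᵥ v) ⬝ᵥ (Y *ᵥ (Uᴴ *ᵥ v))).re
        + 2⁻¹ * (star (Vᴴ *ᵥ v) ⬝ᵥ (Y *ᵥ (Vᴴ *ᵥ v))).re := by
    intro v
    have h := hle.dotProduct_mulVec_nonneg v
    rw [Complex.le_def] at h
    have hre : 0 ≤ (star v ⬝ᵥ (((2 : ℝ)⁻¹ • (U * Y * Uᴴ + V * Y * Vᴴ) - X) *ᵥ v)).re := by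
      simpa using h.1
    have hexp : (star v ⬝ᵥ (((2 : ℝ)⁻¹ • (U * Y * Uᴴ + V * Y * Vᴴ) - X) *ᵥ v)).re
        = 2⁻¹ * (star (Uᴴ *ᵥ v) ⬝ᵥ (Y *ᵥ (Uᴴ *ᵥ v))).re
          + 2⁻¹ * (star (Vᴴ *ᵥ v) ⬝ᵥ (Y *ᵥ (Vᴴ *ᵥ v))).re
          - (star v ⬝ᵥ (X *ᵥ v)).re := by
      have hU' : star v ⬝ᵥ ((U * Y * Uᴴ) *ᵥ v) = star (Uᴴ *ᵥ v) ⬝ᵥ (Y *ᵥ (Uᴴ *ᵥ v)) := by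
        rw [star_mulVec, conjTranspose_conjTranspose, ← dotProduct_mulVec, mulVec_mulVec,
          mulVec_mulVec]
      have hV' : star v ⬝ᵥ ((V * Y * Vᴴ) *ᵥ v) = star (Vᴴ *ᵥ v) ⬝ᵥ (Y *ᵥ (Vᴴ *ᵥ v)) := by
        rw [star_mulVec, conjTranspose_conjTranspose, ← dotProduct_mulVec, mulVec_mulVec,
          mulVec_mulVec]
      rw [sub_mulVec, smul_mulVec, add_mulVec, dotProduct_sub, dotProduct_smul,
        dotProduct_add, hU', hV']
      simp [Complex.sub_re, Complex.add_re, Complex.smul_re]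
    rw [hexp] at hre
    linarith
  -- the two rotated orthonormal families
  have hortho : ∀ (W : Matrix (Fin n) (Fin n) ℂ), W * Wᴴ = 1 →
      ∀ i j, star (Wᴴ *ᵥ w i) ⬝ᵥ (Wᴴ *ᵥ w j) = if i = j then 1 else 0 := by
    intro W hW i j
    rw [star_mulVec, conjTranspose_conjTranspose, ← dotProduct_mulVec, mulVec_mulVec, hW,
      one_mulVec]
    exact hww i j
  have hkeyU := key_bessel hY hkn hk (fun j => Uᴴ *ᵥ w j) (hortho U hUU)
  have hkeyV := key_bessel hY hkn hk (fun j => Vᴴ *ᵥ w j) (hortho V hVV)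
  calc ∑ j : Fin k, eigDesc hX (Fin.castLE hkn j)
      = ∑ j : Fin k, (star (w j) ⬝ᵥ (X *ᵥ w j)).re := Finset.sum_congr rfl fun j _ => heig j
    _ ≤ ∑ j : Fin k, (2⁻¹ * (star (Uᴴ *ᵥ w j) ⬝ᵥ (Y *ᵥ (Uᴴ *ᵥ w j))).re
          + 2⁻¹ * (star (Vᴴ *ᵥ w j) ⬝ᵥ (Y *ᵥ (Vᴴ *ᵥ w j))).re) :=
        Finset.sum_le_sum fun j _ => hquad (w j)
    _ = 2⁻¹ * (∑ j : Fin k, (star (Uᴴ *ᵥ w j) ⬝ᵥ (Y *ᵥ (Uᴴ *ᵥ w j))).re)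
          + 2⁻¹ * (∑ j : Fin k, (star (Vᴴ *ᵥ w j) ⬝ᵥ (Y *ᵥ (Vᴴ *ᵥ w j))).re) := by
        rw [Finset.sum_add_distrib, Finset.mul_sum, Finset.mul_sum]
    _ ≤ 2⁻¹ * (∑ j : Fin k, eigDesc hY (Fin.castLE hkn j))
          + 2⁻¹ * (∑ j : Fin k, eigDesc hY (Fin.castLE hkn j)) := by
        exact add_le_add (mul_le_mul_of_nonneg_left hkeyU (by norm_num))
          (mul_le_mul_of_nonneg_left hkeyV (by norm_num))
    _ = ∑ j : Fin k, eigDesc hY (Fin.castLE hkn j) := by ring
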